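/- For p(x,y,z) = [x,[z,y]] + α[z,[x,y]] with α ∈ K and K having at least n elements, the image of p on UT_n is exactly UT_n^{(0)}: taking x = y = D a diagonal matrix with distinct entries, the map z ↦ [D,[z,D]] from UT_n surjects onto UT_n^{(0)}. -/
import Mathlib


open Matrix

private lemma mul_entry_upper {K : Type*} [Field K] {n : ℕ}
    (A B : Matrix (Fin n) (Fin n) K)
    (hA : ∀ a b : Fin n, b < a → A a b = 0) (hB : ∀ a b : Fin n, b < a → B a b = 0)
    (a b : Fin n) (hab : b ≤ a) :
    (A * B) a b = A a a * B a b := by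
  rw [Matrix.mul_apply, Finset.sum_eq_single a]
  · intro k _ hk
    rcases lt_or_gt_of_ne hk with h | h
    · rw [hA a k h, zero_mul]
    · rw [hB k b (lt_of_le_of_lt hab h), mul_zero]
  · intro h; exact absurd (Finset.mem_univ a) h

private lemma comm_entry_upper {K : Type*} [Field K] {n : ℕ}
    (A B : Matrix (Fin n) (Fin n) K)
    (hA : ∀ a b : Fin n, b < a → A a b = 0) (hB : ∀ a b : Fin n, b < a → B a b = 0)
    (a b : Fin n) (hab : b ≤ a) :
    (A * B - B * A) a b = 0 := by
  rw [Matrix.sub_apply, mul_entry_upper A B hA hB a b hab,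
    mul_entry_upper B A hB hA a b hab]
  rcases hab.lt_or_eq with h | h
  · rw [hA a b h, hB a b h]; ring
  · subst h; ring

private lemma part2 {K : Type*} [Field K] {n : ℕ} (d : Fin n → K)
    (hd : Function.Injective d) (M : Matrix (Fin n) (Fin n) K)
    (hM : ∀ a b : Fin n, b ≤ a → M a b = 0) :
    ∃ Z : Matrix (Fin n) (Fin n) K, (∀ a b : Fin n, b < a → Z a b = 0) ∧
      M = Matrix.diagonal d * (Z * Matrix.diagonal d - Matrix.diagonal d * Z)
        - (Z * Matrix.diagonal d - Matrix.diagonal d * Z) * Matrix.diagonal d := by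
  refine ⟨Matrix.of fun a b => if a = b then 0 else - M a b / (d a - d b) ^ 2, ?_, ?_⟩
  · intro a b h
    simp only [Matrix.of_apply, if_neg (ne_of_gt h), hM a b h.le]
    ring
  · ext a b
    simp only [Matrix.sub_apply, Matrix.diagonal_mul, Matrix.mul_diagonal, Matrix.of_apply]
    by_cases h : a = b
    · subst h
      simp [hM a a le_rfl]
    · rw [if_neg h]
      have hne : d a - d b ≠ 0 := sub_ne_zero.mpr (fun hh => h (hd hh))
      field_simp
      ring
theorem stmt14 {K : Type*} [Field K] {n : ℕ} (hn : 2 ≤ n)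
    (α : K) (d : Fin n → K) (hd : Function.Injective d) :
    ({X : Matrix (Fin n) (Fin n) K | ∃ A B C : Matrix (Fin n) (Fin n) K,
        (∀ a b : Fin n, b < a → A a b = 0) ∧ (∀ a b : Fin n, b < a → B a b = 0) ∧
        (∀ a b : Fin n, b < a → C a b = 0) ∧
        X = (A * (C * B - B * C) - (C * B - B * C) * A)
          + α • (C * (A * B - B * A) - (A * B - B * A) * C)}
      = {X : Matrix (Fin n) (Fin n) K | ∀ a b : Fin n, b ≤ a → X a b = 0}) ∧
    (∀ M : Matrix (Fin n) (Fin n) K, (∀ a b : Fin n, b ≤ a → M a b = 0) →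
      ∃ Z : Matrix (Fin n) (Fin n) K, (∀ a b : Fin n, b < a → Z a b = 0) ∧
        M = Matrix.diagonal d * (Z * Matrix.diagonal d - Matrix.diagonal d * Z)
          - (Z * Matrix.diagonal d - Matrix.diagonal d * Z) * Matrix.diagonal d) := by
  constructor
  · ext X
    simp only [Set.mem_setOf_eq]
    constructor
    · rintro ⟨A, B, C, hA, hB, hC, rfl⟩ a b hab
      have hW : ∀ a b : Fin n, b < a → (C * B - B * C) a b = 0 :=
        fun a b h => comm_entry_upper C B hC hB a b h.le
      have hV : ∀ a b : Fin n, b < a → (A * B - B * A) a b = 0 :=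
        fun a b h => comm_entry_upper A B hA hB a b h.le
      have h1 := comm_entry_upper A _ hA hW a b hab
      have h2 := comm_entry_upper C _ hC hV a b hab
      simp [Matrix.add_apply, Matrix.smul_apply, h1, h2]
    · intro hX
      obtain ⟨Z, hZ, hM⟩ := part2 d hd X hX
      refine ⟨Matrix.diagonal d, Matrix.diagonal d, Z, ?_, ?_, hZ, ?_⟩
      · intro a b h; exact Matrix.diagonal_apply_ne d (ne_of_gt h)
      · intro a b h; exact Matrix.diagonal_apply_ne d (ne_of_gt h)
      · rw [sub_self]
        simp only [Matrix.mul_zero, Matrix.zero_mul, sub_zero, smul_zero, add_zero]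
        exact hM
  · exact fun M hM => part2 d hd M hM
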